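/- arXiv:2509.20921 — 2 statements merged into one kernel-verified Lean document; each statement's English description precedes it below -/
import Mathlib

section
/- Let α^(1), …, α^(N) and β^(1), …, β^(N) be finite signed persistence diagrams such that α := ∑_{k=1}^N α^(k) and β := ∑_{k=1}^N β^(k) are nonnegative (i.e. are finite persistence diagrams). Then ‖Λα − Λβ‖₁ ≤ ∑_{k=1}^N W₁^rk(α^(k), β^(k)). -/
open scoped Classical ENNReal
open MeasureTheory Filter

noncomputable section

/-- Off-diagonal points of `ℝ²_≤`. -/
abbrev Pt : Type := {p : ℝ × ℝ // p.1 < p.2}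

/-- The quotient `(ℝ²_≤ ∖ Δ) ∪ {Δ}`: the diagonal is collapsed to the single
point `none`. -/
abbrev PtD : Type := Option Pt

/-- The rank "distance" formula on `ℝ²_≤`. -/
def drk (x y : ℝ × ℝ) : ℝ :=
  (x.2 - x.1) ^ 2 / 2 + (y.2 - y.1) ^ 2 / 2 - (max (min x.2 y.2 - max x.1 y.1) 0) ^ 2

/-- The dimension "distance" formula on `ℝ²_≤` (length of the symmetric
difference of the intervals `[x₁,x₂]` and `[y₁,y₂]`). -/
def ddim (x y : ℝ × ℝ) : ℝ :=
  (x.2 - x.1) + (y.2 - y.1) - 2 * max (min x.2 y.2 - max x.1 y.1) 0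

/-- `d_rk` on the quotient `(ℝ²_≤ ∖ Δ) ∪ {Δ}`, with `d_rk(x,Δ) = ½(x₂−x₁)²`. -/
def drkQ : PtD → PtD → ℝ
  | Option.some x, Option.some y => drk x.1 y.1
  | Option.some x, Option.none => (x.1.2 - x.1.1) ^ 2 / 2
  | Option.none, Option.some y => (y.1.2 - y.1.1) ^ 2 / 2
  | Option.none, Option.none => 0

/-- `d_dim` on the quotient `(ℝ²_≤ ∖ Δ) ∪ {Δ}`, with `d_dim(x,Δ) = x₂−x₁`. -/
def ddimQ : PtD → PtD → ℝ
  | Option.some x, Option.some y => ddim x.1 y.1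
  | Option.some x, Option.none => x.1.2 - x.1.1
  | Option.none, Option.some y => y.1.2 - y.1.1
  | Option.none, Option.none => 0

/-- The cost of the coupling between finite diagrams `α` and `β` determined by
the multiset `m` of matched pairs: matched pairs pay `d` between themselves,
and every unmatched point of `α` or `β` is matched with the diagonal `Δ`. -/
def cost (d : PtD → PtD → ℝ) (α β : Multiset Pt) (m : Multiset (Pt × Pt)) : ℝ :=
  (m.map fun p => d (some p.1) (some p.2)).sum
    + ((α - m.map Prod.fst).map fun x => d (some x) none).sum
    + ((β - m.map Prod.snd).map fun y => d none (some y)).sum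

/-- The 1-Wasserstein distance between finite persistence diagrams with ground
metric `d`: the infimum of the costs of all couplings. -/
def W1fin (d : PtD → PtD → ℝ) (α β : Multiset Pt) : ℝ :=
  sInf {c : ℝ | ∃ m : Multiset (Pt × Pt),
    m.map Prod.fst ≤ α ∧ m.map Prod.snd ≤ β ∧ c = cost d α β m}

/-- The tent function `tent_x(t) = max(0, min(t−x₁, x₂−t))`. -/
def tent (x : Pt) (t : ℝ) : ℝ := max 0 (min (t - x.1.1) (x.1.2 - t))

/-- The persistence landscape `λ_α(k,t)`: the `k`-th largest element of the
multiset `{tent_x(t) : x ∈ α}` (and `0` if `α` has fewer than `k` elements). -/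
def landscape (α : Multiset Pt) (k : ℕ) (t : ℝ) : ℝ :=
  sSup {h : ℝ | 0 < h ∧ k ≤ Multiset.card (α.filter fun x => h ≤ tent x t)}

/-- `‖Λα − Λβ‖₁ = ∑_{k ≥ 1} ∫ |λ_α(k,t) − λ_β(k,t)| dt`. -/
def lambdaDistFin (α β : Multiset Pt) : ℝ :=
  ∑' k : ℕ, ∫ t : ℝ, |landscape α (k + 1) t - landscape β (k + 1) t|

/-- The finite persistence diagram (multiset) underlying the positive part of a
finite signed persistence diagram `σ : Pt →₀ ℤ`: the point `p` occurs with
multiplicity `max(σ(p), 0)`. -/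
def posMult (σ : Pt →₀ ℤ) : Multiset Pt :=
  Finsupp.toMultiset (σ.mapRange Int.toNat Int.toNat_zero)

/-- The 1-Wasserstein distance between finite signed persistence diagrams:
`W₁^d(σ, τ) := W₁^d(σ₊ + τ₋, τ₊ + σ₋)`. -/
def W1signed (d : PtD → PtD → ℝ) (σ τ : Pt →₀ ℤ) : ℝ :=
  W1fin d (posMult σ + posMult (-τ)) (posMult τ + posMult (-σ))

namespace Aux18
open Set

open Set

def tentI (a b : ℝ) (t : ℝ) : ℝ := max 0 (min (t - a) (b - t))

lemma tentI_nonneg (a b t : ℝ) : 0 ≤ tentI a b t := le_max_left _ _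

lemma tent_eq (x : Pt) : tent x = tentI x.1.1 x.1.2 := rfl

lemma tentI_continuous (a b : ℝ) : Continuous (tentI a b) :=
  continuous_const.max ((continuous_id.sub continuous_const).min
    (continuous_const.sub continuous_id))

lemma tentI_eq_zero {a b t : ℝ} (h : t ∉ Icc a b) : tentI a b t = 0 := by
  have hm : min (t - a) (b - t) ≤ 0 := by
    rw [Set.mem_Icc] at h; push_neg at h
    rcases le_or_gt a t with h1 | h1
    · exact min_le_of_right_le (by linarith [h h1])
    · exact min_le_of_left_le (by linarith)
  simp [tentI, max_eq_left hm]

lemma tentI_eq_zero_of_le {a b : ℝ} (hba : b ≤ a) (t : ℝ) : tentI a b t = 0 := by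
  have hm : min (t - a) (b - t) ≤ 0 := by
    rcases le_total t a with h1 | h1
    · exact min_le_of_left_le (by linarith)
    · exact min_le_of_right_le (by linarith)
  simp [tentI, max_eq_left hm]

lemma tentI_hcs (a b : ℝ) : HasCompactSupport (tentI a b) :=
  HasCompactSupport.intro isCompact_Icc (fun _ ht => tentI_eq_zero ht)

lemma tentI_integrable (a b : ℝ) : Integrable (tentI a b) :=
  (tentI_continuous a b).integrable_of_hasCompactSupport (tentI_hcs a b)

lemma tent_integrable (x : Pt) : Integrable (tent x) := by
  rw [tent_eq]; exact tentI_integrable _ _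

lemma integral_tentI (a b : ℝ) : ∫ t, tentI a b t = (max (b - a) 0) ^ 2 / 4 := by
  rcases le_or_gt b a with hba | hab
  · have h0 : max (b - a) 0 = 0 := max_eq_right (by linarith)
    simp only [tentI_eq_zero_of_le hba, h0]
    simp
  · have hab' : a ≤ b := hab.le
    set m : ℝ := (a + b) / 2 with hm
    have ham : a ≤ m := by rw [hm]; linarith
    have hmb : m ≤ b := by rw [hm]; linarith
    have h1 : ∫ t, tentI a b t = ∫ t in Icc a b, tentI a b t :=
      (setIntegral_eq_integral_of_forall_compl_eq_zero (fun t ht => tentI_eq_zero ht)).symm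
    have h2 : ∫ t in Icc a b, tentI a b t = ∫ t in a..b, tentI a b t := by
      rw [MeasureTheory.integral_Icc_eq_integral_Ioc, intervalIntegral.integral_of_le hab']
    have hii : ∀ c d : ℝ, IntervalIntegrable (tentI a b) volume c d :=
      fun c d => (tentI_integrable a b).intervalIntegrable
    have h3 : (∫ t in a..m, tentI a b t) + ∫ t in m..b, tentI a b t = ∫ t in a..b, tentI a b t :=
      intervalIntegral.integral_add_adjacent_intervals (hii a m) (hii m b)
    have h4 : ∫ t in a..m, tentI a b t = ∫ t in a..m, (t - a) := by
      apply intervalIntegral.integral_congr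
      intro t ht
      rw [Set.uIcc_of_le ham, Set.mem_Icc] at ht
      have : t - a ≤ b - t := by rw [hm] at ht; linarith [ht.2]
      simp only [tentI, min_eq_left this]
      exact max_eq_right (by linarith [ht.1])
    have h5 : ∫ t in m..b, tentI a b t = ∫ t in m..b, (b - t) := by
      apply intervalIntegral.integral_congr
      intro t ht
      rw [Set.uIcc_of_le hmb, Set.mem_Icc] at ht
      have : b - t ≤ t - a := by rw [hm] at ht; linarith [ht.1]
      simp only [tentI, min_eq_right this]
      exact max_eq_right (by linarith [ht.2])
    have h6 : ∫ t in a..m, (t - a) = (m ^ 2 - a ^ 2) / 2 - (m - a) * a := by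
      rw [intervalIntegral.integral_sub (f := fun t : ℝ => t) (g := fun _ : ℝ => a)
        (continuous_id.intervalIntegrable _ _) intervalIntegrable_const,
        integral_id, intervalIntegral.integral_const]
      simp [smul_eq_mul]
    have h7 : ∫ t in m..b, (b - t) = (b - m) * b - (b ^ 2 - m ^ 2) / 2 := by
      rw [intervalIntegral.integral_sub (f := fun _ : ℝ => b) (g := fun t : ℝ => t)
        intervalIntegrable_const (continuous_id.intervalIntegrable _ _),
        integral_id, intervalIntegral.integral_const]
      simp [smul_eq_mul]
    have hmax : max (b - a) 0 = b - a := max_eq_left (by linarith)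
    rw [h1, h2, ← h3, h4, h5, h6, h7, hmax, hm]
    ring

lemma integral_tent (x : Pt) : ∫ t, tent x t = (x.1.2 - x.1.1) ^ 2 / 4 := by
  rw [tent_eq, integral_tentI, max_eq_left (by linarith [x.2])]

lemma tentI_min (a b c d t : ℝ) :
    min (tentI a b t) (tentI c d t) = tentI (max a c) (min b d) t := by
  unfold tentI
  rw [← max_min_distrib_left]
  congr 1
  rw [min_min_min_comm]
  congr 1
  · rcases le_total a c with h | h
    · rw [max_eq_right h, min_eq_right (by linarith)]
    · rw [max_eq_left h, min_eq_left (by linarith)]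
  · rcases le_total b d with h | h
    · rw [min_eq_left h, min_eq_left (by linarith)]
    · rw [min_eq_right h, min_eq_right (by linarith)]

lemma abs_tentI_sub (a b c d t : ℝ) :
    |tentI a b t - tentI c d t| =
      tentI a b t + tentI c d t - 2 * tentI (max a c) (min b d) t := by
  rw [← tentI_min]
  rcases le_total (tentI a b t) (tentI c d t) with h | h
  · rw [abs_of_nonpos (by linarith), min_eq_left h]; ring
  · rw [abs_of_nonneg (by linarith), min_eq_right h]; ring

lemma integrable_abs_tent_sub (x y : Pt) :
    Integrable (fun t => |tent x t - tent y t|) :=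
  ((tent_integrable x).sub (tent_integrable y)).abs

lemma integral_abs_tent_sub (x y : Pt) :
    ∫ t, |tent x t - tent y t| = drk x.1 y.1 / 2 := by
  have h1 : ∀ t, |tent x t - tent y t| =
      tent x t + tent y t - 2 * tentI (max x.1.1 y.1.1) (min x.1.2 y.1.2) t := by
    intro t; rw [tent_eq x, tent_eq y]; exact abs_tentI_sub _ _ _ _ t
  rw [show (fun t => |tent x t - tent y t|) =
      fun t => tent x t + tent y t - 2 * tentI (max x.1.1 y.1.1) (min x.1.2 y.1.2) t
    from funext h1]
  have hadd : Integrable (fun t => tent x t + tent y t) :=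
    (tent_integrable x).add (tent_integrable y)
  have hmul : Integrable (fun t => 2 * tentI ((x:ℝ×ℝ).1 ⊔ (y:ℝ×ℝ).1) ((x:ℝ×ℝ).2 ⊓ (y:ℝ×ℝ).2) t) :=
    (tentI_integrable _ _).const_mul 2
  rw [MeasureTheory.integral_sub hadd hmul,
    MeasureTheory.integral_add (tent_integrable x) (tent_integrable y),
    integral_const_mul, integral_tent, integral_tent, integral_tentI]
  unfold drk
  ring

lemma drk_nonneg (x y : Pt) : 0 ≤ drk x.1 y.1 := by
  have h := integral_abs_tent_sub x y
  have h2 : 0 ≤ ∫ t, |tent x t - tent y t| :=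
    integral_nonneg fun t => abs_nonneg _
  linarith [h ▸ h2]


lemma filter_le_filter_of_mem {α : Type*} [DecidableEq α] {X : Multiset α} {p q : α → Prop}
    [DecidablePred p] [DecidablePred q] (h : ∀ x ∈ X, p x → q x) : X.filter p ≤ X.filter q := by
  rw [Multiset.le_iff_count]
  intro a
  rw [Multiset.count_filter, Multiset.count_filter]
  split_ifs with hp hq hq
  · exact le_refl _
  · by_cases haX : a ∈ X
    · exact absurd (h a haX hp) hq
    · simp [Multiset.count_eq_zero.2 haX]
  all_goals positivity
def S (v h : ℝ) : ℝ := if 0 < h ∧ h ≤ v then 1 else 0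

lemma S_nonneg (v h : ℝ) : 0 ≤ S v h := by unfold S; split_ifs <;> norm_num

lemma S_eq_indicator (v : ℝ) : S v = (Set.Ioc 0 v).indicator 1 := by
  funext h; simp [S, Set.indicator, Set.mem_Ioc]

lemma S_integrable (v : ℝ) : Integrable (S v) := by
  rw [S_eq_indicator]
  refine (integrable_indicator_iff measurableSet_Ioc).2 ?_
  refine integrableOn_const (ne_of_lt ?_)
  exact measure_Ioc_lt_top

lemma integral_S {v : ℝ} (hv : 0 ≤ v) : ∫ h, S v h = v := by
  rw [S_eq_indicator, integral_indicator_one measurableSet_Ioc, Real.volume_real_Ioc_of_le hv]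
  ring

lemma S_mono {a b : ℝ} (hab : a ≤ b) (h : ℝ) : S a h ≤ S b h := by
  unfold S
  split_ifs with h1 h2 h2 <;> try norm_num
  exact absurd ⟨h1.1, h1.2.trans hab⟩ h2

lemma abs_S_sub (a b h : ℝ) : |S a h - S b h| = S (max a b) h - S (min a b) h := by
  rcases le_total a b with hab | hab
  · rw [abs_of_nonpos (sub_nonpos.2 (S_mono hab h)), max_eq_right hab, min_eq_left hab]; ring
  · rw [abs_of_nonneg (sub_nonneg.2 (S_mono hab h)), max_eq_left hab, min_eq_right hab]

lemma integrable_abs_S_sub (a b : ℝ) : Integrable (fun h => |S a h - S b h|) :=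
  ((S_integrable a).sub (S_integrable b)).abs

lemma integral_abs_S_sub {a b : ℝ} (ha : 0 ≤ a) (hb : 0 ≤ b) :
    ∫ h, |S a h - S b h| = |a - b| := by
  have : (fun h => |S a h - S b h|) = fun h => S (max a b) h - S (min a b) h :=
    funext fun h => abs_S_sub a b h
  rw [this, MeasureTheory.integral_sub (S_integrable _) (S_integrable _),
    integral_S (le_max_of_le_left ha), integral_S (le_min ha hb)]
  rw [max_sub_min_eq_abs, abs_sub_comm]

def cntR (X : Multiset Pt) (t h : ℝ) : ℝ := (X.map fun x => S (tent x t) h).sum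

lemma cntR_add (X Y : Multiset Pt) (t h : ℝ) :
    cntR (X + Y) t h = cntR X t h + cntR Y t h := by
  simp [cntR, Multiset.map_add]

lemma cntR_nonneg (X : Multiset Pt) (t h : ℝ) : 0 ≤ cntR X t h := by
  refine Multiset.sum_nonneg ?_
  intro r hr
  obtain ⟨x, _, rfl⟩ := Multiset.mem_map.1 hr
  exact S_nonneg _ _

lemma cntR_eq_card (X : Multiset Pt) {t h : ℝ} (hh : 0 < h) :
    cntR X t h = ((X.filter fun x => h ≤ tent x t).card : ℝ) := by
  induction X using Multiset.induction_on with
  | empty => simp [cntR]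
  | cons a s ih =>
    rw [cntR] at ih ⊢
    rw [Multiset.map_cons, Multiset.sum_cons, Multiset.filter_cons, ih]
    have hS : S (tent a t) h = if h ≤ tent a t then 1 else 0 := by simp [S, hh]
    rw [hS]
    by_cases hta : h ≤ tent a t <;> simp [hta] <;> ring

lemma sum_ite_card {K n : ℕ} (hn : n ≤ K) :
    ∑ k ∈ Finset.range K, (if k + 1 ≤ n then (1 : ℝ) else 0) = n := by
  have h : (Finset.range K).filter (fun k => k + 1 ≤ n) = Finset.range n := by
    ext k; simp only [Finset.mem_filter, Finset.mem_range]; omega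
  rw [Finset.sum_boole, h, Finset.card_range]

lemma sum_abs_ite {K n₁ n₂ : ℕ} (h1 : n₁ ≤ K) (h2 : n₂ ≤ K) :
    ∑ k ∈ Finset.range K,
      |(if k + 1 ≤ n₁ then (1 : ℝ) else 0) - (if k + 1 ≤ n₂ then (1 : ℝ) else 0)| =
      |(n₁ : ℝ) - n₂| := by
  have key : ∀ k : ℕ,
      |(if k + 1 ≤ n₁ then (1 : ℝ) else 0) - (if k + 1 ≤ n₂ then (1 : ℝ) else 0)| =
      (if k + 1 ≤ max n₁ n₂ then (1 : ℝ) else 0) - (if k + 1 ≤ min n₁ n₂ then (1 : ℝ) else 0) := by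
    intro k
    by_cases ha : k + 1 ≤ n₁ <;> by_cases hb : k + 1 ≤ n₂ <;>
      simp [ha, hb, le_max_iff, le_min_iff]
  rw [Finset.sum_congr rfl (fun k _ => key k), Finset.sum_sub_distrib,
    sum_ite_card (max_le h1 h2), sum_ite_card ((min_le_left n₁ n₂).trans h1)]
  rw [Nat.cast_max, Nat.cast_min, max_sub_min_eq_abs, abs_sub_comm]

lemma tent_nonneg (x : Pt) (t : ℝ) : 0 ≤ tent x t := le_max_left _ _

lemma mem_le_sum_tent {X : Multiset Pt} {h t : ℝ}
    (hcard : 1 ≤ (X.filter fun x => h ≤ tent x t).card) :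
    h ≤ (X.map fun x => tent x t).sum := by
  have hne : (X.filter fun x => h ≤ tent x t) ≠ 0 := by
    intro h0; rw [h0] at hcard; simp at hcard
  obtain ⟨x, hx⟩ := Multiset.exists_mem_of_ne_zero hne
  have hxX : x ∈ X := (Multiset.mem_filter.1 hx).1
  have hxh : h ≤ tent x t := (Multiset.mem_filter.1 hx).2
  refine hxh.trans (Multiset.single_le_sum ?_ _ (Multiset.mem_map_of_mem _ hxX))
  intro r hr
  obtain ⟨y, _, rfl⟩ := Multiset.mem_map.1 hr
  exact tent_nonneg y t

lemma bddAbove_landscapeSet (X : Multiset Pt) {k : ℕ} (hk : 1 ≤ k) (t : ℝ) :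
    BddAbove {h : ℝ | 0 < h ∧ k ≤ (X.filter fun x => h ≤ tent x t).card} := by
  refine ⟨(X.map fun x => tent x t).sum, ?_⟩
  rintro h ⟨_, hcard⟩
  exact mem_le_sum_tent (hk.trans hcard)

lemma landscape_nonneg (X : Multiset Pt) (k : ℕ) (t : ℝ) : 0 ≤ landscape X k t :=
  Real.sSup_nonneg (fun _ hh => hh.1.le)

lemma landscape_le_sum_tent (X : Multiset Pt) {k : ℕ} (hk : 1 ≤ k) (t : ℝ) :
    landscape X k t ≤ (X.map fun x => tent x t).sum := by
  refine Real.sSup_le ?_ ?_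
  · rintro h ⟨_, hcard⟩
    exact mem_le_sum_tent (hk.trans hcard)
  · refine Multiset.sum_nonneg ?_
    intro r hr
    obtain ⟨y, _, rfl⟩ := Multiset.mem_map.1 hr
    exact tent_nonneg y t

lemma landscape_zero_of_card_lt {X : Multiset Pt} {k : ℕ} (h : Multiset.card X < k) (t : ℝ) :
    landscape X k t = 0 := by
  have he : {h : ℝ | 0 < h ∧ k ≤ (X.filter fun x => h ≤ tent x t).card} = ∅ := by
    refine Set.eq_empty_iff_forall_notMem.2 ?_
    rintro r ⟨_, hcard⟩
    have := (Multiset.card_le_card (Multiset.filter_le (fun x => r ≤ tent x t) X)).trans_lt h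
    omega
  rw [landscape, he, Real.sSup_empty]

lemma le_landscape_iff (X : Multiset Pt) {k : ℕ} (hk : 1 ≤ k) {t h : ℝ} (hh : 0 < h) :
    h ≤ landscape X k t ↔ k ≤ (X.filter fun x => h ≤ tent x t).card := by
  constructor
  · intro hle
    by_contra hlt
    push_neg at hlt
    set E := {e : ℝ | 0 < e ∧ k ≤ (X.filter fun x => e ≤ tent x t).card} with hE
    have hEne : E.Nonempty := by
      by_contra he
      rw [Set.not_nonempty_iff_eq_empty] at he
      rw [landscape, ← hE, he, Real.sSup_empty] at hle
      linarith
    have hsub : ∀ e ∈ E, e < h := by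
      rintro e ⟨he0, hek⟩
      by_contra hhe
      push_neg at hhe
      have hmono : (X.filter fun x => e ≤ tent x t) ≤ X.filter fun x => h ≤ tent x t :=
        Multiset.monotone_filter_right X (fun x hx => hhe.trans hx)
      have := hek.trans (Multiset.card_le_card hmono)
      omega
    obtain ⟨w, hwh, hwbound⟩ : ∃ w, w < h ∧ ∀ x ∈ X, tent x t < h → tent x t ≤ w := by
      set V := (X.map fun x => tent x t).filter (fun v => v < h) with hV
      by_cases hVe : V = 0
      · refine ⟨h / 2, by linarith, ?_⟩
        intro x hx hlt'
        exfalso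
        have : tent x t ∈ V := Multiset.mem_filter.2 ⟨Multiset.mem_map_of_mem _ hx, hlt'⟩
        rw [hVe] at this
        simp at this
      · have hVne : V.toFinset.Nonempty := by
          rw [Multiset.toFinset_nonempty]; exact hVe
        refine ⟨V.toFinset.max' hVne, ?_, ?_⟩
        · have : V.toFinset.max' hVne ∈ V := Multiset.mem_toFinset.1 (Finset.max'_mem _ _)
          exact (Multiset.mem_filter.1 this).2
        · intro x hx hlt'
          refine Finset.le_max' _ _ ?_
          exact Multiset.mem_toFinset.2 (Multiset.mem_filter.2 ⟨Multiset.mem_map_of_mem _ hx, hlt'⟩)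
    have hwsup : w < landscape X k t := lt_of_lt_of_le hwh hle
    obtain ⟨e, heE, hwe⟩ := exists_lt_of_lt_csSup hEne hwsup
    have heh : e < h := hsub e heE
    have hfeq : (X.filter fun x => e ≤ tent x t) = X.filter fun x => h ≤ tent x t := by
      refine Multiset.filter_congr ?_
      intro x hx
      constructor
      · intro het
        by_contra hht
        push_neg at hht
        exact absurd (hwbound x hx hht) (by linarith)
      · intro hht
        linarith
    have := heE.2
    rw [hfeq] at this
    omega
  · intro hcard
    exact le_csSup (bddAbove_landscapeSet X hk t) ⟨hh, hcard⟩

lemma lt_landscape_iff (X : Multiset Pt) {k : ℕ} (hk : 1 ≤ k) {t c : ℝ} (hc : 0 ≤ c) :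
    c < landscape X k t ↔ k ≤ (X.filter fun x => c < tent x t).card := by
  constructor
  · intro h
    have hEne : {e : ℝ | 0 < e ∧ k ≤ (X.filter fun x => e ≤ tent x t).card}.Nonempty := by
      by_contra he
      rw [Set.not_nonempty_iff_eq_empty] at he
      rw [landscape, he, Real.sSup_empty] at h
      linarith
    obtain ⟨e, heE, hce⟩ := exists_lt_of_lt_csSup hEne h
    refine heE.2.trans (Multiset.card_le_card ?_)
    exact Multiset.monotone_filter_right X (fun x hx => lt_of_lt_of_le hce hx)
  · intro hcard
    have hne : (X.filter fun x => c < tent x t) ≠ 0 := by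
      intro h0; rw [h0] at hcard; simp at hcard; omega
    obtain ⟨x₀, hx₀⟩ := Multiset.exists_mem_of_ne_zero hne
    set W := (X.map fun x => tent x t).filter (fun v => c < v) with hW
    have hWx : tent x₀ t ∈ W := Multiset.mem_filter.2
      ⟨Multiset.mem_map_of_mem _ (Multiset.mem_filter.1 hx₀).1, (Multiset.mem_filter.1 hx₀).2⟩
    have hWne : W.toFinset.Nonempty := ⟨tent x₀ t, Multiset.mem_toFinset.2 hWx⟩
    set w := W.toFinset.min' hWne with hw
    have hwW : w ∈ W := Multiset.mem_toFinset.1 (Finset.min'_mem _ _)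
    have hcw : c < w := (Multiset.mem_filter.1 hwW).2
    refine lt_of_lt_of_le hcw ?_
    refine le_csSup (bddAbove_landscapeSet X hk t) ⟨lt_of_le_of_lt hc hcw, ?_⟩
    refine hcard.trans (Multiset.card_le_card ?_)
    refine filter_le_filter_of_mem ?_
    intro x hx hcx
    exact Finset.min'_le _ _ (Multiset.mem_toFinset.2
      (Multiset.mem_filter.2 ⟨Multiset.mem_map_of_mem _ hx, hcx⟩))

lemma abs_multiset_sum_le {ι : Type*} (M : Multiset ι) (f : ι → ℝ) :
    |(M.map f).sum| ≤ (M.map fun i => |f i|).sum := by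
  induction M using Multiset.induction_on with
  | empty => simp
  | cons a s ih =>
    simp only [Multiset.map_cons, Multiset.sum_cons]
    exact (abs_add_le _ _).trans (by linarith)

lemma multiset_integrable_sum {ι : Type*} (M : Multiset ι) (f : ι → ℝ → ℝ)
    (h : ∀ i ∈ M, Integrable (f i)) :
    Integrable (fun t => (M.map fun i => f i t).sum) := by
  induction M using Multiset.induction_on with
  | empty => simpa using integrable_const (0 : ℝ)
  | cons a s ih =>
    simp only [Multiset.map_cons, Multiset.sum_cons]
    exact (h a (Multiset.mem_cons_self a s)).add
      (ih fun i hi => h i (Multiset.mem_cons_of_mem hi))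

lemma multiset_integral_sum {ι : Type*} (M : Multiset ι) (f : ι → ℝ → ℝ)
    (h : ∀ i ∈ M, Integrable (f i)) :
    ∫ t, (M.map fun i => f i t).sum = (M.map fun i => ∫ t, f i t).sum := by
  induction M using Multiset.induction_on with
  | empty => simp
  | cons a s ih =>
    simp only [Multiset.map_cons, Multiset.sum_cons]
    rw [MeasureTheory.integral_add (h a (Multiset.mem_cons_self a s))
      (multiset_integrable_sum s f fun i hi => h i (Multiset.mem_cons_of_mem hi)),
      ih fun i hi => h i (Multiset.mem_cons_of_mem hi)]

lemma measurable_card_filter (X : Multiset Pt) (c : ℝ) :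
    Measurable (fun t => ((X.filter fun x => c < tent x t).card : ℝ)) := by
  induction X using Multiset.induction_on with
  | empty => simpa using measurable_const
  | cons a s ih =>
    have heq : (fun t => (((a ::ₘ s).filter fun x => c < tent x t).card : ℝ))
        = fun t => ((if c < tent a t then (1 : ℝ) else 0)
            + ((s.filter fun x => c < tent x t).card : ℝ)) := by
      funext t
      rw [Multiset.filter_cons]
      by_cases h : c < tent a t <;> simp [h] <;> ring
    rw [heq]
    refine Measurable.add ?_ ih
    refine Measurable.ite ?_ measurable_const measurable_const
    exact measurableSet_lt measurable_const
      (by rw [tent_eq a]; exact (tentI_continuous _ _).measurable)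

lemma measurable_landscape (X : Multiset Pt) (k : ℕ) :
    Measurable (fun t => landscape X (k + 1) t) := by
  apply measurable_of_Ioi
  intro c
  by_cases hc : 0 ≤ c
  · have heq : (fun t => landscape X (k + 1) t) ⁻¹' (Set.Ioi c)
        = {t | ((k : ℝ) + 1) ≤ ((X.filter fun x => c < tent x t).card : ℝ)} := by
      ext t
      simp only [Set.mem_preimage, Set.mem_Ioi, Set.mem_setOf_eq]
      rw [lt_landscape_iff X (Nat.succ_le_succ (Nat.zero_le k)) hc]
      push_cast
      constructor <;> intro h <;> exact_mod_cast h
    rw [heq]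
    exact measurableSet_le measurable_const (measurable_card_filter X c)
  · have heq : (fun t => landscape X (k + 1) t) ⁻¹' (Set.Ioi c) = Set.univ := by
      ext t
      simp only [Set.mem_preimage, Set.mem_Ioi, Set.mem_univ, iff_true]
      exact lt_of_lt_of_le (by linarith) (landscape_nonneg X (k + 1) t)
    rw [heq]
    exact MeasurableSet.univ

lemma sum_tent_nonneg (X : Multiset Pt) (t : ℝ) : 0 ≤ (X.map fun x => tent x t).sum := by
  refine Multiset.sum_nonneg ?_
  intro r hr
  obtain ⟨y, _, rfl⟩ := Multiset.mem_map.1 hr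
  exact tent_nonneg y t

lemma integrable_sum_tent (X : Multiset Pt) :
    Integrable (fun t => (X.map fun x => tent x t).sum) :=
  multiset_integrable_sum X (fun x => tent x) (fun x _ => tent_integrable x)

lemma integrable_landscape_abs (X Y : Multiset Pt) (k : ℕ) :
    Integrable (fun t => |landscape X (k + 1) t - landscape Y (k + 1) t|) := by
  have hg : Integrable (fun t => (X.map fun x => tent x t).sum + (Y.map fun x => tent x t).sum) :=
    (integrable_sum_tent X).add (integrable_sum_tent Y)
  refine Integrable.mono' hg ?_ ?_
  · exact ((measurable_landscape X k).sub (measurable_landscape Y k)).abs.aestronglyMeasurable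
  · refine Filter.Eventually.of_forall fun t => ?_
    rw [Real.norm_eq_abs, abs_abs, abs_sub_le_iff]
    have h1 := landscape_nonneg X (k + 1) t
    have h2 := landscape_nonneg Y (k + 1) t
    have h3 := landscape_le_sum_tent X (Nat.succ_le_succ (Nat.zero_le k)) t
    have h4 := landscape_le_sum_tent Y (Nat.succ_le_succ (Nat.zero_le k)) t
    constructor <;> linarith

lemma pointwise_bound (α β γ : Multiset Pt) (m : Multiset (Pt × Pt))
    (h1 : m.map Prod.fst ≤ α + γ) (h2 : m.map Prod.snd ≤ β + γ) {K : ℕ}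
    (hKα : Multiset.card α ≤ K) (hKβ : Multiset.card β ≤ K) (t : ℝ) :
    ∑ k ∈ Finset.range K, |landscape α (k + 1) t - landscape β (k + 1) t| ≤
      (m.map fun p => |tent p.1 t - tent p.2 t|).sum
        + (((α + γ) - m.map Prod.fst).map fun x => tent x t).sum
        + (((β + γ) - m.map Prod.snd).map fun y => tent y t).sum := by
  classical
  -- step functions for landscapes
  have hite : ∀ (Z : Multiset Pt) (k : ℕ) {h : ℝ}, 0 < h →
      S (landscape Z (k + 1) t) h
        = if k + 1 ≤ (Z.filter fun x => h ≤ tent x t).card then (1 : ℝ) else 0 := by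
    intro Z k h hh
    have hiff : (0 < h ∧ h ≤ landscape Z (k + 1) t)
        ↔ (k + 1 ≤ (Z.filter fun x => h ≤ tent x t).card) := by
      rw [le_landscape_iff Z (Nat.succ_le_succ (Nat.zero_le k)) hh]
      simp [hh]
    unfold S
    exact if_congr hiff rfl rfl
  have key : ∀ h : ℝ,
      ∑ k ∈ Finset.range K, |S (landscape α (k + 1) t) h - S (landscape β (k + 1) t) h|
        = |cntR α t h - cntR β t h| := by
    intro h
    by_cases hh : 0 < h
    · rw [Finset.sum_congr rfl (fun k _ => by rw [hite α k hh, hite β k hh]),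
        cntR_eq_card α hh, cntR_eq_card β hh]
      exact sum_abs_ite ((Multiset.card_le_card (Multiset.filter_le _ _)).trans hKα)
        ((Multiset.card_le_card (Multiset.filter_le _ _)).trans hKβ)
    · have h0 : ∀ v : ℝ, S v h = 0 := fun v => by simp [S, hh]
      simp [h0, cntR]
  -- triangle inequality for counting functions
  have tri : ∀ h : ℝ, |cntR α t h - cntR β t h| ≤
      (m.map fun p => |S (tent p.1 t) h - S (tent p.2 t) h|).sum
        + (((α + γ) - m.map Prod.fst).map fun x => S (tent x t) h).sum
        + (((β + γ) - m.map Prod.snd).map fun y => S (tent y t) h).sum := by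
    intro h
    have hdecX : m.map Prod.fst + ((α + γ) - m.map Prod.fst) = α + γ := by
      rw [add_comm]; exact tsub_add_cancel_of_le h1
    have hdecY : m.map Prod.snd + ((β + γ) - m.map Prod.snd) = β + γ := by
      rw [add_comm]; exact tsub_add_cancel_of_le h2
    have hXc : cntR α t h + cntR γ t h
        = cntR (m.map Prod.fst) t h + cntR ((α + γ) - m.map Prod.fst) t h := by
      rw [← cntR_add, ← cntR_add, hdecX]
    have hYc : cntR β t h + cntR γ t h
        = cntR (m.map Prod.snd) t h + cntR ((β + γ) - m.map Prod.snd) t h := by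
      rw [← cntR_add, ← cntR_add, hdecY]
    have hmap1 : cntR (m.map Prod.fst) t h = (m.map fun p => S (tent p.1 t) h).sum := by
      rw [cntR, Multiset.map_map]; rfl
    have hmap2 : cntR (m.map Prod.snd) t h = (m.map fun p => S (tent p.2 t) h).sum := by
      rw [cntR, Multiset.map_map]; rfl
    have habs : |(m.map fun p => S (tent p.1 t) h).sum - (m.map fun p => S (tent p.2 t) h).sum|
        ≤ (m.map fun p => |S (tent p.1 t) h - S (tent p.2 t) h|).sum := by
      rw [← Multiset.sum_map_sub]
      exact abs_multiset_sum_le m _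
    have hBx : 0 ≤ cntR ((α + γ) - m.map Prod.fst) t h := cntR_nonneg _ _ _
    have hBy : 0 ≤ cntR ((β + γ) - m.map Prod.snd) t h := cntR_nonneg _ _ _
    have hrx : cntR ((α + γ) - m.map Prod.fst) t h
        = (((α + γ) - m.map Prod.fst).map fun x => S (tent x t) h).sum := rfl
    have hry : cntR ((β + γ) - m.map Prod.snd) t h
        = (((β + γ) - m.map Prod.snd).map fun y => S (tent y t) h).sum := rfl
    rw [← hrx, ← hry]
    have harith : cntR α t h - cntR β t h
        = ((m.map fun p => S (tent p.1 t) h).sum - (m.map fun p => S (tent p.2 t) h).sum)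
          + cntR ((α + γ) - m.map Prod.fst) t h - cntR ((β + γ) - m.map Prod.snd) t h := by
      rw [← hmap1, ← hmap2]; linarith
    rw [harith]
    have := abs_sub_abs_le_abs_sub (0:ℝ) (0:ℝ) -- dummy
    calc |(m.map fun p => S (tent p.1 t) h).sum - (m.map fun p => S (tent p.2 t) h).sum
          + cntR ((α + γ) - m.map Prod.fst) t h - cntR ((β + γ) - m.map Prod.snd) t h|
        ≤ |(m.map fun p => S (tent p.1 t) h).sum - (m.map fun p => S (tent p.2 t) h).sum|
          + cntR ((α + γ) - m.map Prod.fst) t h + cntR ((β + γ) - m.map Prod.snd) t h := by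
          rw [abs_le]; constructor <;>
            [skip; skip] <;>
            cases' abs_le.1 (le_refl |(m.map fun p => S (tent p.1 t) h).sum
              - (m.map fun p => S (tent p.2 t) h).sum|) with hl hr <;>
            linarith [neg_abs_le ((m.map fun p => S (tent p.1 t) h).sum
              - (m.map fun p => S (tent p.2 t) h).sum), le_abs_self
              ((m.map fun p => S (tent p.1 t) h).sum - (m.map fun p => S (tent p.2 t) h).sum)]
      _ ≤ _ := by linarith [habs]
  -- now integrate over h
  have hlands : ∀ k ∈ Finset.range K,
      |landscape α (k + 1) t - landscape β (k + 1) t|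
        = ∫ h, |S (landscape α (k + 1) t) h - S (landscape β (k + 1) t) h| := fun k _ =>
    (integral_abs_S_sub (landscape_nonneg α (k + 1) t) (landscape_nonneg β (k + 1) t)).symm
  rw [Finset.sum_congr rfl hlands,
    ← MeasureTheory.integral_finset_sum (Finset.range K)
      (f := fun k h => |S (landscape α (k + 1) t) h - S (landscape β (k + 1) t) h|)
      (fun k _ => integrable_abs_S_sub _ _)]
  have hintm : Integrable (fun h => (m.map fun p => |S (tent p.1 t) h - S (tent p.2 t) h|).sum) :=
    multiset_integrable_sum m _ (fun p _ => integrable_abs_S_sub _ _)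
  have hintx : Integrable (fun h => (((α + γ) - m.map Prod.fst).map fun x => S (tent x t) h).sum) :=
    multiset_integrable_sum _ _ (fun x _ => S_integrable _)
  have hinty : Integrable (fun h => (((β + γ) - m.map Prod.snd).map fun y => S (tent y t) h).sum) :=
    multiset_integrable_sum _ _ (fun y _ => S_integrable _)
  have hle : ∫ h, ∑ k ∈ Finset.range K,
        |S (landscape α (k + 1) t) h - S (landscape β (k + 1) t) h|
      ≤ ∫ h, ((m.map fun p => |S (tent p.1 t) h - S (tent p.2 t) h|).sum
          + (((α + γ) - m.map Prod.fst).map fun x => S (tent x t) h).sum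
          + (((β + γ) - m.map Prod.snd).map fun y => S (tent y t) h).sum) := by
    refine MeasureTheory.integral_mono
      (MeasureTheory.integrable_finset_sum _ (fun k _ => integrable_abs_S_sub _ _))
      ((hintm.add hintx).add hinty) ?_
    intro h
    dsimp only
    rw [key h]
    exact tri h
  refine hle.trans (le_of_eq ?_)
  have hintmx : Integrable (fun h => (m.map fun p => |S (tent p.1 t) h - S (tent p.2 t) h|).sum
      + (((α + γ) - m.map Prod.fst).map fun x => S (tent x t) h).sum) := hintm.add hintx
  rw [MeasureTheory.integral_add hintmx hinty,
    MeasureTheory.integral_add hintm hintx,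
    multiset_integral_sum m _ (fun p _ => integrable_abs_S_sub _ _),
    multiset_integral_sum _ _ (fun (x : Pt) _ => S_integrable (tent x t)),
    multiset_integral_sum _ _ (fun (y : Pt) _ => S_integrable (tent y t))]
  have e1 : (m.map fun (p : Pt × Pt) => ∫ h, |S (tent p.1 t) h - S (tent p.2 t) h|)
      = m.map fun p => |tent p.1 t - tent p.2 t| :=
    Multiset.map_congr rfl fun p _ => integral_abs_S_sub (tent_nonneg _ _) (tent_nonneg _ _)
  have e2 : (((α + γ) - m.map Prod.fst).map fun (x : Pt) => ∫ h, S (tent x t) h)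
      = ((α + γ) - m.map Prod.fst).map fun x => tent x t :=
    Multiset.map_congr rfl fun x _ => integral_S (tent_nonneg _ _)
  have e3 : (((β + γ) - m.map Prod.snd).map fun (y : Pt) => ∫ h, S (tent y t) h)
      = ((β + γ) - m.map Prod.snd).map fun y => tent y t :=
    Multiset.map_congr rfl fun y _ => integral_S (tent_nonneg _ _)
  rw [e1, e2, e3]

lemma main_ineq (α β γ : Multiset Pt) (m : Multiset (Pt × Pt))
    (h1 : m.map Prod.fst ≤ α + γ) (h2 : m.map Prod.snd ≤ β + γ) :
    lambdaDistFin α β ≤ cost drkQ (α + γ) (β + γ) m := by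
  classical
  set K := max (Multiset.card α) (Multiset.card β) with hK
  have hzero : ∀ k ∉ Finset.range K,
      (∫ t, |landscape α (k + 1) t - landscape β (k + 1) t|) = (0 : ℝ) := by
    intro k hk
    rw [Finset.mem_range, not_lt] at hk
    have hα : ∀ t, landscape α (k + 1) t = 0 := fun t => landscape_zero_of_card_lt
      (by have := le_max_left (Multiset.card α) (Multiset.card β); omega) t
    have hβ : ∀ t, landscape β (k + 1) t = 0 := fun t => landscape_zero_of_card_lt
      (by have := le_max_right (Multiset.card α) (Multiset.card β); omega) t
    simp [hα, hβ]
  rw [lambdaDistFin, tsum_eq_sum hzero]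
  have hint1 : ∀ k ∈ Finset.range K,
      Integrable (fun t => |landscape α (k + 1) t - landscape β (k + 1) t|) :=
    fun k _ => integrable_landscape_abs α β k
  rw [← MeasureTheory.integral_finset_sum (Finset.range K)
    (f := fun k t => |landscape α (k + 1) t - landscape β (k + 1) t|) hint1]
  have hintg1 : Integrable (fun t => (m.map fun p => |tent p.1 t - tent p.2 t|).sum) :=
    multiset_integrable_sum _ _ (fun p _ => integrable_abs_tent_sub p.1 p.2)
  have hintg2 : Integrable (fun t => (((α + γ) - m.map Prod.fst).map fun x => tent x t).sum) :=
    integrable_sum_tent _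
  have hintg3 : Integrable (fun t => (((β + γ) - m.map Prod.snd).map fun y => tent y t).sum) :=
    integrable_sum_tent _
  have hintg12 : Integrable (fun t => (m.map fun p => |tent p.1 t - tent p.2 t|).sum
      + (((α + γ) - m.map Prod.fst).map fun x => tent x t).sum) := hintg1.add hintg2
  have hintg : Integrable (fun t => (m.map fun p => |tent p.1 t - tent p.2 t|).sum
      + (((α + γ) - m.map Prod.fst).map fun x => tent x t).sum
      + (((β + γ) - m.map Prod.snd).map fun y => tent y t).sum) := hintg12.add hintg3
  have step1 : ∫ t, ∑ k ∈ Finset.range K, |landscape α (k + 1) t - landscape β (k + 1) t|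
      ≤ ∫ t, ((m.map fun p => |tent p.1 t - tent p.2 t|).sum
        + (((α + γ) - m.map Prod.fst).map fun x => tent x t).sum
        + (((β + γ) - m.map Prod.snd).map fun y => tent y t).sum) := by
    refine MeasureTheory.integral_mono
      (MeasureTheory.integrable_finset_sum _ hint1) hintg ?_
    intro t
    exact pointwise_bound α β γ m h1 h2 (le_max_left _ _) (le_max_right _ _) t
  refine step1.trans ?_
  rw [MeasureTheory.integral_add hintg12 hintg3, MeasureTheory.integral_add hintg1 hintg2,
    multiset_integral_sum _ _ (fun (p : Pt × Pt) _ => integrable_abs_tent_sub p.1 p.2),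
    multiset_integral_sum _ _ (fun (x : Pt) _ => tent_integrable x),
    multiset_integral_sum _ _ (fun (y : Pt) _ => tent_integrable y)]
  have e1 : (m.map fun (p : Pt × Pt) => ∫ t, |tent p.1 t - tent p.2 t|)
      = m.map fun p => drk p.1.1 p.2.1 / 2 :=
    Multiset.map_congr rfl fun p _ => integral_abs_tent_sub p.1 p.2
  have e2 : (((α + γ) - m.map Prod.fst).map fun (x : Pt) => ∫ t, tent x t)
      = ((α + γ) - m.map Prod.fst).map fun x => (x.1.2 - x.1.1) ^ 2 / 4 :=
    Multiset.map_congr rfl fun x _ => integral_tent x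
  have e3 : (((β + γ) - m.map Prod.snd).map fun (y : Pt) => ∫ t, tent y t)
      = ((β + γ) - m.map Prod.snd).map fun y => (y.1.2 - y.1.1) ^ 2 / 4 :=
    Multiset.map_congr rfl fun y _ => integral_tent y
  rw [e1, e2, e3]
  unfold cost
  refine add_le_add (add_le_add ?_ ?_) ?_
  · refine Multiset.sum_map_le_sum_map _ _ ?_
    intro p _
    have := drk_nonneg p.1 p.2
    show drk p.1.1 p.2.1 / 2 ≤ drkQ (some p.1) (some p.2)
    rw [show drkQ (some p.1) (some p.2) = drk p.1.1 p.2.1 from rfl]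
    linarith
  · refine Multiset.sum_map_le_sum_map _ _ ?_
    intro x _
    show (x.1.2 - x.1.1) ^ 2 / 4 ≤ drkQ (some x) none
    rw [show drkQ (some x) none = (x.1.2 - x.1.1) ^ 2 / 2 from rfl]
    nlinarith [sq_nonneg (x.1.2 - x.1.1)]
  · refine Multiset.sum_map_le_sum_map _ _ ?_
    intro y _
    show (y.1.2 - y.1.1) ^ 2 / 4 ≤ drkQ none (some y)
    rw [show drkQ none (some y) = (y.1.2 - y.1.1) ^ 2 / 2 from rfl]
    nlinarith [sq_nonneg (y.1.2 - y.1.1)]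

lemma posMult_count (σ : Pt →₀ ℤ) (p : Pt) : (posMult σ).count p = (σ p).toNat := by
  rw [posMult, Finsupp.count_toMultiset, Finsupp.mapRange_apply]

lemma toNat_sum_decomp {ι : Type*} (s : Finset ι) (f : ι → ℤ) (h : 0 ≤ ∑ i ∈ s, f i) :
    (∑ i ∈ s, f i).toNat + ∑ i ∈ s, (-(f i)).toNat = ∑ i ∈ s, (f i).toNat := by
  have key : ((∑ i ∈ s, f i).toNat : ℤ) + ∑ i ∈ s, ((-(f i)).toNat : ℤ)
      = ∑ i ∈ s, ((f i).toNat : ℤ) := by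
    rw [Int.toNat_of_nonneg h, ← Finset.sum_add_distrib]
    refine Finset.sum_congr rfl fun i _ => ?_
    omega
  exact_mod_cast key

lemma sum_decomp {N : ℕ} (A : Fin N → (Pt →₀ ℤ)) (hA : ∀ p : Pt, 0 ≤ (∑ k, A k) p) :
    posMult (∑ k, A k) + ∑ k, posMult (-(A k)) = ∑ k, posMult (A k) := by
  classical
  refine Multiset.ext.2 fun p => ?_
  rw [Multiset.count_add, Multiset.count_sum', Multiset.count_sum']
  simp only [posMult_count, Finsupp.neg_apply]
  have happ : (∑ k, A k) p = ∑ k, A k p := by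
    rw [Finsupp.finset_sum_apply]
  rw [happ]
  exact toNat_sum_decomp Finset.univ (fun k => A k p) (by rw [← happ]; exact hA p)

lemma multiset_map_finset_sum {ι A B : Type*} [DecidableEq A] [DecidableEq B] (s : Finset ι)
    (m : ι → Multiset A) (g : A → B) :
    (∑ k ∈ s, m k).map g = ∑ k ∈ s, (m k).map g := by
  induction s using Finset.cons_induction with
  | empty => simp
  | cons a s ha ih => rw [Finset.sum_cons, Finset.sum_cons, Multiset.map_add, ih]

lemma cost_add (d : PtD → PtD → ℝ) (σ₁ σ₂ τ₁ τ₂ : Multiset Pt)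
    (m₁ m₂ : Multiset (Pt × Pt))
    (h1 : m₁.map Prod.fst ≤ σ₁) (h2 : m₂.map Prod.fst ≤ σ₂)
    (h3 : m₁.map Prod.snd ≤ τ₁) (h4 : m₂.map Prod.snd ≤ τ₂) :
    cost d (σ₁ + σ₂) (τ₁ + τ₂) (m₁ + m₂) = cost d σ₁ τ₁ m₁ + cost d σ₂ τ₂ m₂ := by
  unfold cost
  simp only [Multiset.map_add]
  rw [← tsub_add_tsub_comm h1 h2, ← tsub_add_tsub_comm h3 h4]
  simp only [Multiset.map_add, Multiset.sum_add]
  ring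

lemma cost_sum {ι : Type*} (s : Finset ι) (d : PtD → PtD → ℝ)
    (σ τ : ι → Multiset Pt) (m : ι → Multiset (Pt × Pt))
    (h1 : ∀ k, (m k).map Prod.fst ≤ σ k) (h2 : ∀ k, (m k).map Prod.snd ≤ τ k) :
    cost d (∑ k ∈ s, σ k) (∑ k ∈ s, τ k) (∑ k ∈ s, m k)
      = ∑ k ∈ s, cost d (σ k) (τ k) (m k) := by
  classical
  induction s using Finset.cons_induction with
  | empty => simp [cost]
  | cons a s ha ih =>
    rw [Finset.sum_cons, Finset.sum_cons, Finset.sum_cons, Finset.sum_cons, ← ih]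
    refine cost_add d _ _ _ _ _ _ (h1 a) ?_ (h2 a) ?_
    · rw [multiset_map_finset_sum]
      exact Finset.sum_le_sum fun k _ => h1 k
    · rw [multiset_map_finset_sum]
      exact Finset.sum_le_sum fun k _ => h2 k

end Aux18

/-- If the finite signed diagrams `α⁽¹⁾,…,α⁽ᴺ⁾` and `β⁽¹⁾,…,β⁽ᴺ⁾` sum to
nonnegative persistence diagrams `α` and `β`, then
`‖Λα − Λβ‖₁ ≤ ∑_k W₁^rk(α⁽ᵏ⁾, β⁽ᵏ⁾)`. -/
theorem stmt18 (N : ℕ) (A B : Fin N → (Pt →₀ ℤ))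
    (hA : ∀ p : Pt, 0 ≤ (∑ k, A k) p) (hB : ∀ p : Pt, 0 ≤ (∑ k, B k) p) :
    lambdaDistFin (posMult (∑ k, A k)) (posMult (∑ k, B k)) ≤
      ∑ k, W1signed drkQ (A k) (B k) := by
  classical
  rcases Nat.eq_zero_or_pos N with hN | hN
  · subst hN
    simp only [Finset.univ_eq_empty, Finset.sum_empty]
    have h0 : posMult (0 : Pt →₀ ℤ) = 0 := by
      simp [posMult]
    have := Aux18.main_ineq (posMult (0 : Pt →₀ ℤ)) (posMult (0 : Pt →₀ ℤ)) 0 0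
      (by simp) (by simp)
    rw [h0] at this
    simpa [cost, h0] using this
  refine le_of_forall_pos_le_add ?_
  intro ε hε
  have hNpos : (0 : ℝ) < ε / N := div_pos hε (by exact_mod_cast hN)
  have hchoice : ∀ k : Fin N, ∃ m : Multiset (Pt × Pt),
      m.map Prod.fst ≤ posMult (A k) + posMult (-(B k)) ∧
      m.map Prod.snd ≤ posMult (B k) + posMult (-(A k)) ∧
      cost drkQ (posMult (A k) + posMult (-(B k))) (posMult (B k) + posMult (-(A k))) m
        < W1signed drkQ (A k) (B k) + ε / N := by
    intro k
    have hne : {c : ℝ | ∃ m : Multiset (Pt × Pt),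
        m.map Prod.fst ≤ posMult (A k) + posMult (-(B k)) ∧
        m.map Prod.snd ≤ posMult (B k) + posMult (-(A k)) ∧
        c = cost drkQ (posMult (A k) + posMult (-(B k)))
          (posMult (B k) + posMult (-(A k))) m}.Nonempty :=
      ⟨cost drkQ (posMult (A k) + posMult (-(B k))) (posMult (B k) + posMult (-(A k))) 0,
        0, by simp, by simp, rfl⟩
    obtain ⟨c, hc, hlt⟩ := Real.lt_sInf_add_pos hne hNpos
    obtain ⟨m, hm1, hm2, rfl⟩ := hc
    exact ⟨m, hm1, hm2, hlt⟩
  choose m hm1 hm2 hmc using hchoice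
  set γ : Multiset Pt := (∑ k, posMult (-(A k))) + (∑ k, posMult (-(B k))) with hγ
  have hXdec : posMult (∑ k, A k) + γ = ∑ k, (posMult (A k) + posMult (-(B k))) := by
    rw [Finset.sum_add_distrib, hγ, ← add_assoc, Aux18.sum_decomp A hA]
  have hYdec : posMult (∑ k, B k) + γ = ∑ k, (posMult (B k) + posMult (-(A k))) := by
    rw [Finset.sum_add_distrib, hγ,
      show posMult (∑ k, B k) + ((∑ k, posMult (-(A k))) + (∑ k, posMult (-(B k))))
        = (posMult (∑ k, B k) + (∑ k, posMult (-(B k)))) + (∑ k, posMult (-(A k))) from by abel,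
      Aux18.sum_decomp B hB]
  have hMf : (∑ k, m k).map Prod.fst ≤ posMult (∑ k, A k) + γ := by
    rw [hXdec, Aux18.multiset_map_finset_sum]
    exact Finset.sum_le_sum fun k _ => hm1 k
  have hMs : (∑ k, m k).map Prod.snd ≤ posMult (∑ k, B k) + γ := by
    rw [hYdec, Aux18.multiset_map_finset_sum]
    exact Finset.sum_le_sum fun k _ => hm2 k
  calc lambdaDistFin (posMult (∑ k, A k)) (posMult (∑ k, B k))
      ≤ cost drkQ (posMult (∑ k, A k) + γ) (posMult (∑ k, B k) + γ) (∑ k, m k) :=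
        Aux18.main_ineq _ _ _ _ hMf hMs
    _ = ∑ k, cost drkQ (posMult (A k) + posMult (-(B k)))
          (posMult (B k) + posMult (-(A k))) (m k) := by
        rw [hXdec, hYdec]
        exact Aux18.cost_sum Finset.univ drkQ _ _ _ hm1 hm2
    _ ≤ ∑ k, (W1signed drkQ (A k) (B k) + ε / N) :=
        Finset.sum_le_sum fun k _ => (hmc k).le
    _ = ∑ k, W1signed drkQ (A k) (B k) + ε := by
        rw [Finset.sum_add_distrib, Finset.sum_const, Finset.card_univ, Fintype.card_fin,
          nsmul_eq_mul, mul_div_cancel₀]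
        exact_mod_cast hN.ne'

end
end

section
/- Let S be a finite set, let a < b be real numbers, let w, v : S → [a,b] be compatible weight functions (i.e. for all σ, τ ∈ S, w(σ) ≤ w(τ) if and only if v(σ) ≤ v(τ)), and set c = 2b − a. Let D_w be the finite persistence diagram consisting of the multiset of points {(w(σ), c) : σ ∈ S} and similarly D_v = {(v(σ), c) : σ ∈ S}. Then W₁^rk(D_w, D_v) = ∑_{σ ∈ S} d_rk((w(σ), c), (v(σ), c)) = ∑_{σ ∈ S} |½(c − w(σ))² − ½(c − v(σ))²|. -/
open scoped Classical ENNReal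
open MeasureTheory Filter

noncomputable section

lemma le_of_le_cons_not_mem {x t : Multiset ℝ} {a : ℝ} (h : x ≤ a ::ₘ t) (ha : a ∉ x) : x ≤ t := by
  rw [Multiset.le_iff_count] at h ⊢
  intro b
  have := h b
  rcases eq_or_ne b a with rfl|hb
  · simp [Multiset.count_eq_zero_of_notMem ha]
  · simpa [Multiset.count_cons, hb] using this

lemma key {S : Type*} [DecidableEq S] (f g : S → ℝ)
    (hf : ∀ σ, 0 ≤ f σ) (hg : ∀ σ, 0 ≤ g σ)
    (hfg : ∀ σ τ, f σ ≤ f τ ↔ g σ ≤ g τ) (s : Finset S) :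
    ∀ (m : Multiset (ℝ × ℝ)),
      m.map Prod.fst ≤ s.val.map f → m.map Prod.snd ≤ s.val.map g →
      (m.map fun p => min p.1 p.2).sum ≤ ∑ σ ∈ s, min (f σ) (g σ) := by
  induction s using Finset.strongInduction with
  | _ s IH =>
  intro m hm1 hm2
  rcases s.eq_empty_or_nonempty with rfl|hs
  · have h0 : m.map Prod.fst = 0 := le_antisymm (by simpa using hm1) (Multiset.zero_le _)
    rw [Multiset.map_eq_zero] at h0
    simp [h0]
  obtain ⟨σ₀, hσ₀s, hmax⟩ := s.exists_max_image f hs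
  have hmaxg : ∀ τ ∈ s, g τ ≤ g σ₀ := fun τ hτ => (hfg τ σ₀).1 (hmax τ hτ)
  set a := f σ₀ with ha
  set bb := g σ₀ with hbb
  set s' := s.erase σ₀ with hs'
  have hss' : s' ⊂ s := Finset.erase_ssubset hσ₀s
  have hcons : s.val = σ₀ ::ₘ s'.val := (Multiset.cons_erase hσ₀s).symm
  have hconsf : s.val.map f = a ::ₘ s'.val.map f := by rw [hcons, Multiset.map_cons]
  have hconsg : s.val.map g = bb ::ₘ s'.val.map g := by rw [hcons, Multiset.map_cons]
  have hsum : ∑ σ ∈ s, min (f σ) (g σ) = min a bb + ∑ σ ∈ s', min (f σ) (g σ) :=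
    (Finset.add_sum_erase s _ hσ₀s).symm
  have hub1 : ∀ p ∈ m, p.1 ≤ a := by
    intro p hp
    have : p.1 ∈ s.val.map f := Multiset.mem_of_le hm1 (Multiset.mem_map_of_mem _ hp)
    obtain ⟨τ, hτ, hτe⟩ := Multiset.mem_map.1 this
    exact hτe ▸ hmax τ hτ
  have hub2 : ∀ p ∈ m, p.2 ≤ bb := by
    intro p hp
    have : p.2 ∈ s.val.map g := Multiset.mem_of_le hm2 (Multiset.mem_map_of_mem _ hp)
    obtain ⟨τ, hτ, hτe⟩ := Multiset.mem_map.1 this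
    exact hτe ▸ hmaxg τ hτ
  have A1 : ∀ m' : Multiset (ℝ × ℝ), m'.map Prod.fst ≤ s.val.map f →
      m'.map Prod.snd ≤ s.val.map g → (a, bb) ∈ m' →
      (m'.map fun p => min p.1 p.2).sum ≤ ∑ σ ∈ s, min (f σ) (g σ) := by
    intro m' hm1' hm2' hmem
    obtain ⟨m₂, rfl⟩ := Multiset.exists_cons_of_mem hmem
    rw [Multiset.map_cons, hconsf, Multiset.cons_le_cons_iff] at hm1'
    rw [Multiset.map_cons, hconsg, Multiset.cons_le_cons_iff] at hm2'
    rw [Multiset.map_cons, Multiset.sum_cons, hsum]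
    exact add_le_add_right (IH s' hss' m₂ hm1' hm2') _
  by_cases h1 : a ∈ m.map Prod.fst
  · by_cases h2 : bb ∈ m.map Prod.snd
    · by_cases h3 : (a, bb) ∈ m
      · exact A1 m hm1 hm2 h3
      · obtain ⟨p1, hp1m, hp1⟩ := Multiset.mem_map.1 h1
        obtain ⟨p2, hp2m, hp2⟩ := Multiset.mem_map.1 h2
        have hne : p1 ≠ p2 := by
          rintro rfl
          apply h3
          have hmem : (p1.1, p1.2) ∈ m := by simpa using hp1m
          rwa [hp1, hp2] at hmem
        obtain ⟨m₁, rfl⟩ := Multiset.exists_cons_of_mem hp1m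
        have hp2m₁ : p2 ∈ m₁ := by
          rcases Multiset.mem_cons.1 hp2m with h|h
          · exact absurd h.symm hne
          · exact h
        obtain ⟨m₂, rfl⟩ := Multiset.exists_cons_of_mem hp2m₁
        set m' : Multiset (ℝ × ℝ) := (a, bb) ::ₘ (p2.1, p1.2) ::ₘ m₂ with hm'
        have hfst : m'.map Prod.fst = (p1 ::ₘ p2 ::ₘ m₂).map Prod.fst := by
          simp [hm', Multiset.map_cons, hp1]
        have hsnd : m'.map Prod.snd = (p1 ::ₘ p2 ::ₘ m₂).map Prod.snd := by
          simp only [hm', Multiset.map_cons, hp2]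
          exact Multiset.cons_swap _ _ _
        have hle : ((p1 ::ₘ p2 ::ₘ m₂).map fun p => min p.1 p.2).sum ≤
            (m'.map fun p => min p.1 p.2).sum := by
          simp only [hm', Multiset.map_cons, Multiset.sum_cons]
          have e1 : p2.1 ≤ a := hub1 p2 (by simp)
          have e2 : p1.2 ≤ bb := hub2 p1 (by simp)
          have hkey : min p1.1 p1.2 + min p2.1 p2.2 ≤ min p1.1 p2.2 + min p2.1 p1.2 := by
            rw [hp1, hp2]
            simp only [min_def]; split_ifs <;> linarith
          rw [hp1, hp2] at hkey ⊢
          linarith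
        exact hle.trans (A1 m' (by rw [hfst]; exact hm1) (by rw [hsnd]; exact hm2)
          (by simp [hm']))
    · obtain ⟨p1, hp1m, hp1⟩ := Multiset.mem_map.1 h1
      obtain ⟨m₂, rfl⟩ := Multiset.exists_cons_of_mem hp1m
      set m' : Multiset (ℝ × ℝ) := (a, bb) ::ₘ m₂ with hm'
      have hfst : m'.map Prod.fst = (p1 ::ₘ m₂).map Prod.fst := by
        simp [hm', Multiset.map_cons, hp1]
      have hmm : m₂.map Prod.snd ≤ (p1 ::ₘ m₂).map Prod.snd :=
        Multiset.map_le_map (Multiset.le_cons_self _ _)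
      have hsnd : m'.map Prod.snd ≤ s.val.map g := by
        rw [hm', Multiset.map_cons, hconsg, Multiset.cons_le_cons_iff]
        have hb2 : bb ∉ m₂.map Prod.snd := fun hc => h2 (Multiset.mem_of_le hmm hc)
        have hsub : m₂.map Prod.snd ≤ bb ::ₘ s'.val.map g := by
          refine hmm.trans ?_
          rw [← hconsg]; exact hm2
        exact le_of_le_cons_not_mem hsub hb2
      have hle : ((p1 ::ₘ m₂).map fun p => min p.1 p.2).sum ≤
          (m'.map fun p => min p.1 p.2).sum := by
        simp only [hm', Multiset.map_cons, Multiset.sum_cons]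
        have e2 : p1.2 ≤ bb := hub2 p1 (by simp)
        have hkey : min p1.1 p1.2 ≤ min a bb := by
          rw [← hp1]; exact min_le_min le_rfl e2
        linarith
      exact hle.trans (A1 m' (by rw [hfst]; exact hm1) hsnd (by simp [hm']))
  · by_cases h2 : bb ∈ m.map Prod.snd
    · obtain ⟨p2, hp2m, hp2⟩ := Multiset.mem_map.1 h2
      obtain ⟨m₂, rfl⟩ := Multiset.exists_cons_of_mem hp2m
      set m' : Multiset (ℝ × ℝ) := (a, bb) ::ₘ m₂ with hm'
      have hsnd : m'.map Prod.snd = (p2 ::ₘ m₂).map Prod.snd := by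
        simp [hm', Multiset.map_cons, hp2]
      have hmm : m₂.map Prod.fst ≤ (p2 ::ₘ m₂).map Prod.fst :=
        Multiset.map_le_map (Multiset.le_cons_self _ _)
      have hfst : m'.map Prod.fst ≤ s.val.map f := by
        rw [hm', Multiset.map_cons, hconsf, Multiset.cons_le_cons_iff]
        have hb1 : a ∉ m₂.map Prod.fst := fun hc => h1 (Multiset.mem_of_le hmm hc)
        have hsub : m₂.map Prod.fst ≤ a ::ₘ s'.val.map f := by
          refine hmm.trans ?_
          rw [← hconsf]; exact hm1
        exact le_of_le_cons_not_mem hsub hb1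
      have hle : ((p2 ::ₘ m₂).map fun p => min p.1 p.2).sum ≤
          (m'.map fun p => min p.1 p.2).sum := by
        simp only [hm', Multiset.map_cons, Multiset.sum_cons]
        have e1 : p2.1 ≤ a := hub1 p2 (by simp)
        have hkey : min p2.1 p2.2 ≤ min a bb := by
          rw [← hp2]; exact min_le_min e1 le_rfl
        linarith
      exact hle.trans (A1 m' hfst (by rw [hsnd]; exact hm2) (by simp [hm']))
    · have hm1' : m.map Prod.fst ≤ s'.val.map f :=
        le_of_le_cons_not_mem (by rw [← hconsf]; exact hm1) h1
      have hm2' : m.map Prod.snd ≤ s'.val.map g :=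
        le_of_le_cons_not_mem (by rw [← hconsg]; exact hm2) h2
      have hnn : (0:ℝ) ≤ min a bb := le_min (hf σ₀) (hg σ₀)
      rw [hsum]
      linarith [IH s' hss' m hm1' hm2']

lemma drk_eq (a b p q : ℝ) (hab : a < b) (hp : p ≤ b) (hq : q ≤ b) :
    drk (p, 2*b-a) (q, 2*b-a)
      = (2*b-a-p)^2/2 + (2*b-a-q)^2/2
        - 2 * min ((2*b-a-p)^2/2) ((2*b-a-q)^2/2) := by
  have h1 : (0:ℝ) < 2*b-a-p := by linarith
  have h2 : (0:ℝ) < 2*b-a-q := by linarith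
  show (2*b-a - p)^2/2 + (2*b-a - q)^2/2
      - (max (min (2*b-a) (2*b-a) - max p q) 0)^2
      = (2*b-a-p)^2/2 + (2*b-a-q)^2/2
        - 2 * min ((2*b-a-p)^2/2) ((2*b-a-q)^2/2)
  rw [min_self]
  rcases le_total p q with h|h
  · rw [max_eq_right h, max_eq_left (by linarith : (0:ℝ) ≤ 2*b-a-q),
      min_eq_right (by nlinarith : (2*b-a-q)^2/2 ≤ (2*b-a-p)^2/2)]
    ring
  · rw [max_eq_left h, max_eq_left (by linarith : (0:ℝ) ≤ 2*b-a-p),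
      min_eq_left (by nlinarith : (2*b-a-p)^2/2 ≤ (2*b-a-q)^2/2)]
    ring

lemma Wgen {S : Type*} [Fintype S] (a b : ℝ) (hab : a < b)
    (w v : S → ℝ) (hw : ∀ σ, w σ ∈ Set.Icc a b) (hv : ∀ σ, v σ ∈ Set.Icc a b)
    (hcomp : ∀ σ τ, w σ ≤ w τ ↔ v σ ≤ v τ)
    (xw xv : S → Pt) (hxw : ∀ σ, (xw σ).1 = (w σ, 2*b-a)) (hxv : ∀ σ, (xv σ).1 = (v σ, 2*b-a)) :
    W1fin drkQ (Finset.univ.val.map xw) (Finset.univ.val.map xv)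
      = ∑ σ : S, drk (w σ, 2*b-a) (v σ, 2*b-a) := by
  classical
  set F : Pt → ℝ := fun x => (x.1.2 - x.1.1)^2/2 with hF
  set f : S → ℝ := fun σ => (2*b-a - w σ)^2/2 with hf
  set g : S → ℝ := fun σ => (2*b-a - v σ)^2/2 with hg
  set α := Finset.univ.val.map xw with hα
  set β := Finset.univ.val.map xv with hβ
  have hFxw : ∀ σ, F (xw σ) = f σ := by intro σ; simp [hF, hf, hxw σ]
  have hFxv : ∀ σ, F (xv σ) = g σ := by intro σ; simp [hF, hg, hxv σ]
  have hf0 : ∀ σ, 0 ≤ f σ := by intro σ; simp only [hf]; positivity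
  have hg0 : ∀ σ, 0 ≤ g σ := by intro σ; simp only [hg]; positivity
  have hwf : ∀ σ τ, f σ ≤ f τ ↔ w τ ≤ w σ := by
    intro σ τ
    have h1 : (0:ℝ) < 2*b-a - w σ := by have := (hw σ).2; linarith
    have h2 : (0:ℝ) < 2*b-a - w τ := by have := (hw τ).2; linarith
    simp only [hf]
    constructor
    · intro h; nlinarith
    · intro h; nlinarith
  have hvg : ∀ σ τ, g σ ≤ g τ ↔ v τ ≤ v σ := by
    intro σ τ
    have h1 : (0:ℝ) < 2*b-a - v σ := by have := (hv σ).2; linarith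
    have h2 : (0:ℝ) < 2*b-a - v τ := by have := (hv τ).2; linarith
    simp only [hg]
    constructor
    · intro h; nlinarith
    · intro h; nlinarith
  have hfg : ∀ σ τ, f σ ≤ f τ ↔ g σ ≤ g τ := fun σ τ =>
    (hwf σ τ).trans ((hcomp τ σ).trans (hvg σ τ).symm)
  have hαF : α.map F = Finset.univ.val.map f := by
    rw [hα, Multiset.map_map]
    exact Multiset.map_congr rfl fun σ _ => hFxw σ
  have hβF : β.map F = Finset.univ.val.map g := by
    rw [hβ, Multiset.map_map]
    exact Multiset.map_congr rfl fun σ _ => hFxv σ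
  have hT : ∑ σ : S, drk (w σ, 2*b-a) (v σ, 2*b-a)
      = (α.map F).sum + (β.map F).sum - 2 * ∑ σ : S, min (f σ) (g σ) := by
    rw [hαF, hβF, ← Finset.sum_eq_multiset_sum, ← Finset.sum_eq_multiset_sum]
    rw [← Finset.sum_add_distrib, Finset.mul_sum, ← Finset.sum_sub_distrib]
    refine Finset.sum_congr rfl fun σ _ => ?_
    rw [drk_eq a b _ _ hab (hw σ).2 (hv σ).2]
  have hcost : ∀ m : Multiset (Pt × Pt), m.map Prod.fst ≤ α → m.map Prod.snd ≤ β →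
      cost drkQ α β m
        = (α.map F).sum + (β.map F).sum - 2 * (m.map fun p => min (F p.1) (F p.2)).sum := by
    intro m hm1 hm2
    have hp : ∀ p ∈ m, ∃ σ, p.1 = xw σ := by
      intro p hpm
      have : p.1 ∈ α := Multiset.mem_of_le hm1 (Multiset.mem_map_of_mem _ hpm)
      rw [hα] at this
      obtain ⟨σ, _, h⟩ := Multiset.mem_map.1 this
      exact ⟨σ, h.symm⟩
    have hq : ∀ p ∈ m, ∃ τ, p.2 = xv τ := by
      intro p hpm
      have : p.2 ∈ β := Multiset.mem_of_le hm2 (Multiset.mem_map_of_mem _ hpm)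
      rw [hβ] at this
      obtain ⟨τ, _, h⟩ := Multiset.mem_map.1 this
      exact ⟨τ, h.symm⟩
    have hdrkF : ∀ p ∈ m, drkQ (some p.1) (some p.2)
        = F p.1 + F p.2 - 2 * min (F p.1) (F p.2) := by
      intro p hpm
      obtain ⟨σ, hσ⟩ := hp p hpm
      obtain ⟨τ, hτ⟩ := hq p hpm
      show drk p.1.1 p.2.1 = _
      rw [hσ, hτ, hFxw σ, hFxv τ, hxw σ, hxv τ, drk_eq a b _ _ hab (hw σ).2 (hv τ).2]
    have hterm1 : (m.map fun p => drkQ (some p.1) (some p.2)).sum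
        = (m.map fun p => F p.1).sum + (m.map fun p => F p.2).sum
          - 2 * (m.map fun p => min (F p.1) (F p.2)).sum := by
      rw [Multiset.map_congr rfl hdrkF]
      rw [Multiset.sum_map_sub, Multiset.sum_map_add]
      congr 1
      rw [← Multiset.sum_map_mul_left]
    have hsub : ∀ (X Y : Multiset Pt), X ≤ Y →
        ((Y - X).map F).sum = (Y.map F).sum - (X.map F).sum := by
      intro X Y hXY
      have e : Y - X + X = Y := tsub_add_cancel_of_le hXY
      have : (Y.map F).sum = ((Y - X).map F).sum + (X.map F).sum := by
        conv_lhs => rw [← e]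
        rw [Multiset.map_add, Multiset.sum_add]
      linarith
    have hterm2 : ((α - m.map Prod.fst).map fun x => drkQ (some x) none).sum
        = (α.map F).sum - (m.map fun p => F p.1).sum := by
      have e1 : ((α - m.map Prod.fst).map fun x => drkQ (some x) none)
          = (α - m.map Prod.fst).map F := Multiset.map_congr rfl fun x _ => rfl
      rw [e1, hsub _ _ hm1]
      congr 1
      rw [Multiset.map_map]
      rfl
    have hterm3 : ((β - m.map Prod.snd).map fun y => drkQ none (some y)).sum
        = (β.map F).sum - (m.map fun p => F p.2).sum := by
      have e1 : ((β - m.map Prod.snd).map fun y => drkQ none (some y))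
          = (β - m.map Prod.snd).map F := Multiset.map_congr rfl fun x _ => rfl
      rw [e1, hsub _ _ hm2]
      congr 1
      rw [Multiset.map_map]
      rfl
    rw [cost, hterm1, hterm2, hterm3]
    ring
  -- the identity coupling
  set m₀ : Multiset (Pt × Pt) := Finset.univ.val.map fun σ => (xw σ, xv σ) with hm₀
  have hm₀1 : m₀.map Prod.fst = α := by rw [hm₀, hα, Multiset.map_map]; rfl
  have hm₀2 : m₀.map Prod.snd = β := by rw [hm₀, hβ, Multiset.map_map]; rfl
  have hm₀min : (m₀.map fun p => min (F p.1) (F p.2)).sum = ∑ σ : S, min (f σ) (g σ) := by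
    rw [hm₀, Multiset.map_map, ← Finset.sum_eq_multiset_sum]
    exact Finset.sum_congr rfl fun σ _ => by simp [Function.comp, hFxw σ, hFxv σ]
  have hmem : (∑ σ : S, drk (w σ, 2*b-a) (v σ, 2*b-a)) ∈
      {c : ℝ | ∃ m : Multiset (Pt × Pt),
        m.map Prod.fst ≤ α ∧ m.map Prod.snd ≤ β ∧ c = cost drkQ α β m} := by
    refine ⟨m₀, le_of_eq hm₀1, le_of_eq hm₀2, ?_⟩
    rw [hcost m₀ (le_of_eq hm₀1) (le_of_eq hm₀2), hm₀min, hT]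
  have hlb : ∀ r ∈ {c : ℝ | ∃ m : Multiset (Pt × Pt),
      m.map Prod.fst ≤ α ∧ m.map Prod.snd ≤ β ∧ c = cost drkQ α β m},
      (∑ σ : S, drk (w σ, 2*b-a) (v σ, 2*b-a)) ≤ r := by
    rintro r ⟨m, hm1, hm2, rfl⟩
    rw [hcost m hm1 hm2, hT]
    have h1 : (m.map fun p => (F p.1, F p.2)).map Prod.fst ≤ Finset.univ.val.map f := by
      have e : (m.map fun p => (F p.1, F p.2)).map Prod.fst = (m.map Prod.fst).map F := by
        rw [Multiset.map_map, Multiset.map_map]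
        exact Multiset.map_congr rfl fun p _ => rfl
      rw [e, ← hαF]
      exact Multiset.map_le_map hm1
    have h2 : (m.map fun p => (F p.1, F p.2)).map Prod.snd ≤ Finset.univ.val.map g := by
      have e : (m.map fun p => (F p.1, F p.2)).map Prod.snd = (m.map Prod.snd).map F := by
        rw [Multiset.map_map, Multiset.map_map]
        exact Multiset.map_congr rfl fun p _ => rfl
      rw [e, ← hβF]
      exact Multiset.map_le_map hm2
    have hkey := key f g hf0 hg0 hfg Finset.univ _ h1 h2
    have e : ((m.map fun p => (F p.1, F p.2)).map fun q => min q.1 q.2).sum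
        = (m.map fun p => min (F p.1) (F p.2)).sum := by
      rw [Multiset.map_map]
      exact congrArg Multiset.sum (Multiset.map_congr rfl fun p _ => rfl)
    rw [e] at hkey
    linarith
  rw [W1fin]
  exact le_antisymm (csInf_le ⟨_, fun r hr => hlb r hr⟩ hmem) (le_csInf ⟨_, hmem⟩ hlb)

/-- Let `w, v : S → [a,b]` be compatible weights on a finite set `S`, and
`c = 2b − a`. For the diagrams `D_w = {(w(σ), c) : σ ∈ S}` and
`D_v = {(v(σ), c) : σ ∈ S}` (the barcodes of the free persistence chain groups
generated by `S`), the 1-Wasserstein distance with ground metric `d_rk` equals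
`∑_σ d_rk((w(σ),c),(v(σ),c)) = ∑_σ |½(c − w(σ))² − ½(c − v(σ))²|`. -/
theorem stmt19 {S : Type*} [Fintype S] (a b : ℝ) (hab : a < b)
    (w v : S → ℝ) (hw : ∀ σ, w σ ∈ Set.Icc a b) (hv : ∀ σ, v σ ∈ Set.Icc a b)
    (hcomp : ∀ σ τ, w σ ≤ w τ ↔ v σ ≤ v τ) :
    W1fin drkQ
      (Finset.univ.val.map fun σ =>
        (⟨(w σ, 2 * b - a), show w σ < 2 * b - a by have := (hw σ).2; linarith⟩ : Pt))
      (Finset.univ.val.map fun σ =>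
        (⟨(v σ, 2 * b - a), show v σ < 2 * b - a by have := (hv σ).2; linarith⟩ : Pt))
      = ∑ σ : S, drk (w σ, 2 * b - a) (v σ, 2 * b - a) ∧
    ∑ σ : S, drk (w σ, 2 * b - a) (v σ, 2 * b - a)
      = ∑ σ : S, |(2 * b - a - w σ) ^ 2 / 2 - (2 * b - a - v σ) ^ 2 / 2| := by
  refine ⟨Wgen a b hab w v hw hv hcomp _ _ (fun σ => rfl) (fun σ => rfl), ?_⟩
  refine Finset.sum_congr rfl fun σ _ => ?_
  rw [drk_eq a b _ _ hab (hw σ).2 (hv σ).2]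
  rcases le_total ((2*b-a - w σ)^2/2) ((2*b-a - v σ)^2/2) with h|h
  · rw [min_eq_left h, abs_of_nonpos (by linarith)]; ring
  · rw [min_eq_right h, abs_of_nonneg (by linarith)]; ring


end
end
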